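/- For λ > 0, the curve γ(τ) = X^λ(λτ, -√(1+λ²) τ) on the surface Σ_λ = image of X^λ satisfies ‖γ'(τ)‖² = (1+λ²)/sinh²(λτ) in the induced metric, and hence γ restricted to [1, ∞) has finite length ∫₁^∞ √(1+λ²)/sinh(λτ) dτ < ∞. Moreover ⟨γ(τ), (0,-1,1)⟩ = -√(1+λ²) e^{-√(1+λ²)τ}/sinh(λτ) → 0 as τ → ∞. -/

import Mathlib

noncomputable section
open Real Set Filter MeasureTheory

/-- The Minkowski bilinear form on `ℝ^{2,1}`. -/
def mink (u v : ℝ × ℝ × ℝ) : ℝ := u.1 * v.1 + u.2.1 * v.2.1 - u.2.2 * v.2.2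

/-- The glide-invariant surface parametrization `X^λ`. -/
def Xlam (l : ℝ) (t s : ℝ) : ℝ × ℝ × ℝ :=
  (Real.sqrt (1 + l ^ 2) * (t - Real.cosh t / Real.sinh t) + l * s,
   Real.sqrt (1 + l ^ 2) * Real.sinh s / Real.sinh t,
   Real.sqrt (1 + l ^ 2) * Real.cosh s / Real.sinh t)

/-- For `λ > 0`, the curve `γ(τ) = X^λ(λτ, -√(1+λ²)τ)` on `Σ_λ` has squared speed
`(1+λ²)/sinh²(λτ)`, hence finite length on `[1,∞)` (the speed is integrable there);
moreover `⟨γ(τ), (0,-1,1)⟩ = -√(1+λ²) e^{-√(1+λ²)τ}/sinh(λτ) → 0` as `τ → ∞`. -/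
theorem stmt14 (l : ℝ) (hl : 0 < l) :
    let γ : ℝ → ℝ × ℝ × ℝ := fun τ => Xlam l (l * τ) (-(Real.sqrt (1 + l ^ 2)) * τ)
    (∀ τ : ℝ, 0 < τ →
      mink (deriv γ τ) (deriv γ τ) = (1 + l ^ 2) / (Real.sinh (l * τ)) ^ 2) ∧
    IntegrableOn (fun τ => Real.sqrt (1 + l ^ 2) / Real.sinh (l * τ)) (Ici (1 : ℝ)) ∧
    (∀ τ : ℝ, 0 < τ →
      mink (γ τ) (0, -1, 1) =
        -(Real.sqrt (1 + l ^ 2)) * Real.exp (-(Real.sqrt (1 + l ^ 2)) * τ) /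
          Real.sinh (l * τ)) ∧
    Tendsto (fun τ => mink (γ τ) (0, -1, 1)) atTop (nhds 0) := by
  intro γ
  set a : ℝ := Real.sqrt (1 + l ^ 2) with ha
  have h1l : (0:ℝ) < 1 + l ^ 2 := by positivity
  have ha2 : a ^ 2 = 1 + l ^ 2 := Real.sq_sqrt h1l.le
  have ha0 : 0 < a := Real.sqrt_pos.mpr h1l
  -- part 1 : squared speed
  have part1 : ∀ τ : ℝ, 0 < τ →
      mink (deriv γ τ) (deriv γ τ) = (1 + l ^ 2) / (Real.sinh (l * τ)) ^ 2 := by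
    intro τ hτ
    have hSpos : 0 < Real.sinh (l * τ) := Real.sinh_pos_iff.mpr (by positivity)
    have hSne : Real.sinh (l * τ) ≠ 0 := hSpos.ne'
    have hlt : HasDerivAt (fun τ : ℝ => l * τ) l τ := by
      simpa using (hasDerivAt_id τ).const_mul l
    have hnt : HasDerivAt (fun τ : ℝ => -a * τ) (-a) τ := by
      simpa using (hasDerivAt_id τ).const_mul (-a)
    have hS := hlt.sinh
    have hC := hlt.cosh
    have hSa := hnt.sinh
    have hCa := hnt.cosh
    have h1 : HasDerivAt (fun τ : ℝ => a * (l * τ - Real.cosh (l * τ) / Real.sinh (l * τ))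
        + l * (-a * τ))
        (a * (l - (Real.sinh (l * τ) * l * Real.sinh (l * τ)
          - Real.cosh (l * τ) * (Real.cosh (l * τ) * l)) / Real.sinh (l * τ) ^ 2)
          + l * -a) τ :=
      ((hlt.sub (hC.div hS hSne)).const_mul a).add (hnt.const_mul l)
    have h2 : HasDerivAt (fun τ : ℝ => a * Real.sinh (-a * τ) / Real.sinh (l * τ))
        ((a * (Real.cosh (-a * τ) * -a) * Real.sinh (l * τ)
          - a * Real.sinh (-a * τ) * (Real.cosh (l * τ) * l)) / Real.sinh (l * τ) ^ 2) τ :=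
      (hSa.const_mul a).div hS hSne
    have h3 : HasDerivAt (fun τ : ℝ => a * Real.cosh (-a * τ) / Real.sinh (l * τ))
        ((a * (Real.sinh (-a * τ) * -a) * Real.sinh (l * τ)
          - a * Real.cosh (-a * τ) * (Real.cosh (l * τ) * l)) / Real.sinh (l * τ) ^ 2) τ :=
      (hCa.const_mul a).div hS hSne
    have hγ : HasDerivAt γ
        ((a * (l - (Real.sinh (l * τ) * l * Real.sinh (l * τ)
          - Real.cosh (l * τ) * (Real.cosh (l * τ) * l)) / Real.sinh (l * τ) ^ 2)
          + l * -a),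
        ((a * (Real.cosh (-a * τ) * -a) * Real.sinh (l * τ)
          - a * Real.sinh (-a * τ) * (Real.cosh (l * τ) * l)) / Real.sinh (l * τ) ^ 2),
        ((a * (Real.sinh (-a * τ) * -a) * Real.sinh (l * τ)
          - a * Real.cosh (-a * τ) * (Real.cosh (l * τ) * l)) / Real.sinh (l * τ) ^ 2)) τ :=
      h1.prodMk (h2.prodMk h3)
    rw [hγ.deriv]
    simp only [mink, neg_mul, Real.sinh_neg, Real.cosh_neg]
    have hC2 : Real.cosh (l * τ) ^ 2 = Real.sinh (l * τ) ^ 2 + 1 := Real.cosh_sq _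
    have hCa2 : Real.cosh (a * τ) ^ 2 = Real.sinh (a * τ) ^ 2 + 1 := Real.cosh_sq _
    field_simp
    linear_combination
      ((a ^ 2 * l ^ 2 *
        (Real.cosh (l * τ) ^ 2 - Real.sinh (l * τ) ^ 2))) * hC2 +
      ((a ^ 4 * Real.sinh (l * τ) ^ 2 -
        a ^ 2 * l ^ 2 * Real.cosh (l * τ) ^ 2)) * hCa2 +
      ((a ^ 2 + 1) * Real.sinh (l * τ) ^ 2) * ha2
  refine ⟨part1, ?_, ?_, ?_⟩
  · -- integrability
    rw [integrableOn_Ici_iff_integrableOn_Ioi]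
    have hexp : IntegrableOn (fun τ : ℝ => (2 * a / (1 - Real.exp (-2 * l))) * Real.exp (-l * τ))
        (Ioi (1:ℝ)) := (exp_neg_integrableOn_Ioi 1 hl).const_mul _
    have he2l : Real.exp (-2 * l) < 1 := by
      rw [Real.exp_lt_one_iff]; linarith
    refine hexp.mono' ?_ ?_
    · refine (ContinuousOn.aestronglyMeasurable ?_ measurableSet_Ioi)
      apply ContinuousOn.div continuousOn_const
        (Real.continuous_sinh.comp (continuous_mul_left l)).continuousOn
      intro x hx
      simp only [mem_Ioi] at hx
      refine (Real.sinh_pos_iff.mpr ?_).ne'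
      show (0:ℝ) < l * x
      nlinarith
    · filter_upwards [ae_restrict_mem measurableSet_Ioi] with x hx
      simp only [mem_Ioi] at hx
      have hlx : l ≤ l * x := by nlinarith
      have hSpos : 0 < Real.sinh (l * x) := Real.sinh_pos_iff.mpr (by nlinarith)
      have key : (1 - Real.exp (-2 * l)) * Real.exp (l * x) / 2 ≤ Real.sinh (l * x) := by
        rw [Real.sinh_eq]
        have : Real.exp (-(l * x)) ≤ Real.exp (l * x) * Real.exp (-2 * l) := by
          rw [← Real.exp_add, Real.exp_le_exp]; linarith
        nlinarith [Real.exp_pos (l * x)]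
      rw [Real.norm_of_nonneg (by positivity)]
      rw [div_le_iff₀ hSpos]
      have hb : 0 < 1 - Real.exp (-2 * l) := by linarith
      have hmul : Real.exp (-l * x) * Real.exp (l * x) = 1 := by
        rw [← Real.exp_add]; norm_num
      have hkey2 : 2 * a / (1 - Real.exp (-2 * l)) * Real.exp (-l * x) *
          ((1 - Real.exp (-2 * l)) * Real.exp (l * x) / 2)
          = a * (Real.exp (-l * x) * Real.exp (l * x)) := by
        have hbne : (1:ℝ) - Real.exp (-2 * l) ≠ 0 := hb.ne'
        field_simp
        rw [div_eq_iff (by rw [neg_mul] at hbne; exact hbne)]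
        ring
      calc a = a * (Real.exp (-l * x) * Real.exp (l * x)) := by rw [hmul]; ring
        _ = 2 * a / (1 - Real.exp (-2 * l)) * Real.exp (-l * x) *
          ((1 - Real.exp (-2 * l)) * Real.exp (l * x) / 2) := hkey2.symm
        _ ≤ 2 * a / (1 - Real.exp (-2 * l)) * Real.exp (-l * x) * Real.sinh (l * x) := by
            apply mul_le_mul_of_nonneg_left key (by positivity)
  · -- pointwise formula
    intro τ hτ
    have hSne : Real.sinh (l * τ) ≠ 0 := (Real.sinh_pos_iff.mpr (by positivity)).ne'
    simp only [γ, Xlam, mink, neg_mul, Real.sinh_neg, Real.cosh_neg]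
    rw [← ha]
    field_simp
    rw [← Real.cosh_sub_sinh (a * τ)]
    ring
  · -- limit
    have hform : ∀ τ : ℝ, 0 < τ →
        mink (γ τ) (0, -1, 1) = -a * Real.exp (-a * τ) / Real.sinh (l * τ) := by
      intro τ hτ
      have hSne : Real.sinh (l * τ) ≠ 0 := (Real.sinh_pos_iff.mpr (by positivity)).ne'
      simp only [γ, Xlam, mink, neg_mul, Real.sinh_neg, Real.cosh_neg]
      rw [← ha]
      field_simp
      rw [← Real.cosh_sub_sinh (a * τ)]
      ring
    have hEq : (fun τ => mink (γ τ) (0, -1, 1)) =ᶠ[atTop]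
        fun τ => -a * Real.exp (-a * τ) / Real.sinh (l * τ) := by
      filter_upwards [eventually_gt_atTop (0:ℝ)] with τ hτ using hform τ hτ
    have hmul : Tendsto (fun τ : ℝ => l * τ) atTop atTop :=
      tendsto_id.const_mul_atTop hl
    have hamul : Tendsto (fun τ : ℝ => a * τ) atTop atTop :=
      tendsto_id.const_mul_atTop ha0
    have h1 : Tendsto (fun τ : ℝ => -a * Real.exp (-a * τ)) atTop (nhds 0) := by
      have he : Tendsto (fun τ : ℝ => Real.exp (-a * τ)) atTop (nhds 0) := by
        have h := Real.tendsto_exp_neg_atTop_nhds_zero.comp hamul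
        exact h.congr fun τ => by simp [Function.comp, neg_mul]
      simpa using he.const_mul (-a)
    have h2 : Tendsto (fun τ : ℝ => (Real.sinh (l * τ))⁻¹) atTop (nhds 0) := by
      apply Tendsto.inv_tendsto_atTop
      apply tendsto_atTop_mono' atTop ?_ hmul
      filter_upwards [eventually_gt_atTop (0:ℝ)] with τ hτ
      exact Real.self_le_sinh_iff.mpr (by positivity)
    have hlim : Tendsto (fun τ : ℝ => -a * Real.exp (-a * τ) / Real.sinh (l * τ))
        atTop (nhds 0) := by
      simpa [div_eq_mul_inv] using h1.mul h2
    exact hlim.congr' hEq.symm
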